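/- Let $\pmb{a} = (a_1,\dots,a_K)$ be a nonnegative real vector, $\pmb{w}$ a nonincreasing nonnegative weight vector summing to 1, and $\sigma$ a permutation of $[K]$ with $a_{\sigma(1)} \geq \dots \geq a_{\sigma(K)}$. If $\pmb{a}'$ is obtained from $\pmb{a}$ by setting $a'_{\sigma(i)} := a_{\sigma(i)} + a_{\sigma(j)}$ and $a'_{\sigma(j)} := 0$ for some $i < j$ (leaving other components unchanged), then $\mathrm{OWA}_{\pmb{w}}(\pmb{a}') \geq \mathrm{OWA}_{\pmb{w}}(\pmb{a})$. -/

import Mathlib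

/-- OWA of a vector with nonincreasing weights: weights are applied to the
entries sorted in nonincreasing order. -/
noncomputable def OWA {K : ℕ} (w a : Fin K → ℝ) : ℝ :=
  ∑ k, w k * a (Tuple.sort (fun i => -a i) k)

lemma owa_eq_of_antitone {K : ℕ} (w a : Fin K → ℝ) (σ : Equiv.Perm (Fin K))
    (hσ : Antitone (a ∘ σ)) : OWA w a = ∑ k, w k * a (σ k) := by
  have hmono : Monotone ((fun i => -a i) ∘ σ) := by
    intro x y hxy
    simp only [Function.comp_apply, neg_le_neg_iff]
    exact hσ hxy
  have h := (Tuple.comp_sort_eq_comp_iff_monotone (f := fun i => -a i) (σ := σ)).2 hmono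
  have h' : ∀ k, a (σ k) = a (Tuple.sort (fun i => -a i) k) := by
    intro k
    have := congrFun h k
    simp only [Function.comp_apply] at this
    linarith
  unfold OWA
  exact Finset.sum_congr rfl fun k _ => by rw [h' k]

lemma owa_ge_perm {K : ℕ} (w a : Fin K → ℝ) (hw : Antitone w) (σ : Equiv.Perm (Fin K)) :
    ∑ k, w k * a (σ k) ≤ OWA w a := by
  set τ := Tuple.sort (fun i => -a i) with hτ
  have hmono : Monotone ((fun i => -a i) ∘ τ) := Tuple.monotone_sort _
  have hanti : Antitone (a ∘ τ) := by
    intro x y hxy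
    have := hmono hxy
    simp only [Function.comp_apply] at this ⊢
    linarith
  have hmv : Monovary w (a ∘ τ) := by
    intro x y hxy
    rcases le_or_gt y x with h | h
    · exact hw h
    · exact absurd (hanti h.le) (not_le.2 hxy)
  have key := hmv.sum_smul_comp_perm_le_sum_smul (σ := τ⁻¹ * σ)
  simp only [smul_eq_mul, Equiv.Perm.mul_apply, Function.comp_apply,
    Equiv.Perm.inv_def, Equiv.apply_symm_apply] at key
  unfold OWA
  exact key

/-- Transferring mass from a smaller sorted position to a larger one (zeroing
the smaller) does not decrease the OWA value when the weights are nonincreasing. -/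
theorem owa_transfer (K : ℕ) (a w : Fin K → ℝ)
    (ha : ∀ k, 0 ≤ a k) (hw : Antitone w) (hw0 : ∀ k, 0 ≤ w k)
    (hw1 : ∑ k, w k = 1)
    (σ : Equiv.Perm (Fin K)) (hσ : Antitone (a ∘ σ))
    (i j : Fin K) (hij : i < j)
    (a' : Fin K → ℝ)
    (ha' : a' = Function.update (Function.update a (σ j) 0) (σ i)
      (a (σ i) + a (σ j))) :
    OWA w a ≤ OWA w a' := by
  have hij' : i ≠ j := ne_of_lt hij
  have hσij : σ i ≠ σ j := fun h => hij' (σ.injective h)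
  have hvi : a' (σ i) = a (σ i) + a (σ j) := by
    rw [ha']; simp [Function.update_self]
  have hvj : a' (σ j) = 0 := by
    rw [ha', Function.update_of_ne (Ne.symm hσij), Function.update_self]
  have hvk : ∀ k, k ≠ i → k ≠ j → a' (σ k) = a (σ k) := by
    intro k hki hkj
    rw [ha', Function.update_of_ne (fun h => hki (σ.injective h)),
      Function.update_of_ne (fun h => hkj (σ.injective h))]
  have h1 : OWA w a = ∑ k, w k * a (σ k) := owa_eq_of_antitone w a σ hσ
  have h2 : ∑ k, w k * a' (σ k) ≤ OWA w a' := owa_ge_perm w a' hw σ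
  have h3 : ∑ k, w k * a (σ k) ≤ ∑ k, w k * a' (σ k) := by
    have hdiff : ∀ k ∈ Finset.univ, k ∉ ({i, j} : Finset (Fin K)) →
        w k * a' (σ k) - w k * a (σ k) = 0 := by
      intro k _ hk
      simp only [Finset.mem_insert, Finset.mem_singleton, not_or] at hk
      rw [hvk k hk.1 hk.2]; ring
    have : ∑ k, (w k * a' (σ k) - w k * a (σ k))
        = ∑ k ∈ ({i, j} : Finset (Fin K)), (w k * a' (σ k) - w k * a (σ k)) :=
      (Finset.sum_subset (Finset.subset_univ _) hdiff).symm
    rw [Finset.sum_pair hij'] at this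
    have hsum : ∑ k, (w k * a' (σ k) - w k * a (σ k))
        = (w i - w j) * a (σ j) := by
      rw [this, hvi, hvj]; ring
    have hpos : 0 ≤ (w i - w j) * a (σ j) :=
      mul_nonneg (sub_nonneg.2 (hw hij.le)) (ha _)
    have := Finset.sum_sub_distrib (f := fun k => w k * a' (σ k))
      (g := fun k => w k * a (σ k)) (s := Finset.univ)
    linarith [hsum, this.symm ▸ hsum]
  linarith
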